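/- arXiv:1905.01660 — 2 statements merged into one kernel-verified Lean document; each statement's English description precedes it below -/
import Mathlib

section
/- Chain-folding lemma: Let β ∈ I(d), let U be a finite multiset of elements of O(β), and let D = (r₁,c₁),…,(r_t,c_t) be an extended β-chain each of whose elements occurs in the multiset U + U^#. Define φ(r,c) = (r,c) if r ≤ c*, and φ(r,c) = (c*, r*) otherwise. Then: (i) the pairs φ(r₁,c₁),…,φ(r_t,c_t) are pairwise distinct elements of O(β), each of which occurs in U; (ii) these pairs can be enumerated as an extended β-chain C (i.e., with strictly decreasing rows and strictly increasing columns); and (iii) every element of D occurs in the multiset C + C^#, where C is regarded as a multiset. -/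
/-- `I(d)`: the set of `d`-element subsets `β` of `{1,…,2d}` such that for every
`j ∈ {1,…,2d}` exactly one of `j` and `j* = 2d+1-j` belongs to `β`. -/
def IsId (d : ℕ) (β : Finset ℕ) : Prop :=
  β ⊆ Finset.Icc 1 (2 * d) ∧ β.card = d ∧
    ∀ j ∈ Finset.Icc 1 (2 * d), Xor' (j ∈ β) ((2 * d + 1 - j) ∈ β)

/-- `A(β) = {(r,c) : r ∈ {1,…,2d}∖β, c ∈ β}`. -/
def Apairs (d : ℕ) (β : Finset ℕ) : Set (ℕ × ℕ) :=
  {p | p.1 ∈ Finset.Icc 1 (2 * d) ∧ p.1 ∉ β ∧ p.2 ∈ β}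

/-- The reflection `(r,c)^# = (c*, r*)`. -/
def reflPair (d : ℕ) (p : ℕ × ℕ) : ℕ × ℕ := (2 * d + 1 - p.2, 2 * d + 1 - p.1)

/-- `O(β) = {(r,c) ∈ A(β) : r ≤ c*}`. -/
def Opairs (d : ℕ) (β : Finset ℕ) : Set (ℕ × ℕ) :=
  {p ∈ Apairs d β | p.1 ≤ 2 * d + 1 - p.2}

/-- The folding map `φ`: the identity on pairs with `r ≤ c*`, and the reflection
`(r,c) ↦ (c*, r*)` on pairs with `r > c*`. -/
def phiFold (d : ℕ) (p : ℕ × ℕ) : ℕ × ℕ :=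
  if p.1 ≤ 2 * d + 1 - p.2 then p else reflPair d p

/-- Chain-folding lemma: if `U` is a multiset on `O(β)` and `D = (r₁,c₁),…,(r_t,c_t)` is
an extended `β`-chain whose elements all occur in `U + U^#`, then (i) the folded pairs
`φ(r_i,c_i)` are pairwise distinct elements of `O(β)` occurring in `U`; (ii) they can be
re-enumerated (by a permutation) as an extended `β`-chain `C`; and (iii) every element of
`D` occurs in the multiset `C + C^#`. -/
theorem statement4 (d : ℕ) (hd : 0 < d) (β : Finset ℕ) (hβ : IsId d β)
    (U : Multiset (ℕ × ℕ)) (hU : ∀ p ∈ U, p ∈ Opairs d β)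
    (t : ℕ) (ch : Fin t → ℕ × ℕ)
    (hA : ∀ i, ch i ∈ Apairs d β)
    (hrows : StrictAnti fun i => (ch i).1)
    (hcols : StrictMono fun i => (ch i).2)
    (hocc : ∀ i, ch i ∈ U + U.map (reflPair d)) :
    (Function.Injective (fun i : Fin t => phiFold d (ch i)) ∧
      ∀ i : Fin t, phiFold d (ch i) ∈ Opairs d β ∧ phiFold d (ch i) ∈ U) ∧
    (∃ σ : Equiv.Perm (Fin t),
      StrictAnti (fun i => (phiFold d (ch (σ i))).1) ∧
      StrictMono (fun i => (phiFold d (ch (σ i))).2)) ∧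
    (∀ i : Fin t,
      ch i ∈ (Finset.univ.val.map fun j : Fin t => phiFold d (ch j)) +
        (Finset.univ.val.map fun j : Fin t => phiFold d (ch j)).map (reflPair d)) := by
  have hbβ : ∀ x ∈ β, 1 ≤ x ∧ x ≤ 2 * d := fun x hx => Finset.mem_Icc.mp (hβ.1 hx)
  have hbnd : ∀ i : Fin t,
      1 ≤ (ch i).1 ∧ (ch i).1 ≤ 2 * d ∧ 1 ≤ (ch i).2 ∧ (ch i).2 ≤ 2 * d := by
    intro i
    obtain ⟨h1, _, h3⟩ := hA i
    have b1 := Finset.mem_Icc.mp h1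
    have b2 := hbβ _ h3
    omega
  -- φ(ch i) always lies in U
  have hmemU : ∀ i : Fin t, phiFold d (ch i) ∈ U := by
    intro i
    rcases Multiset.mem_add.mp (hocc i) with h | h
    · have ho := hU _ h
      have hle : (ch i).1 ≤ 2 * d + 1 - (ch i).2 := ho.2
      simpa [phiFold, hle] using h
    · obtain ⟨q, hqU, hq⟩ := Multiset.mem_map.mp h
      have ho := hU _ hqU
      obtain ⟨⟨hq1, _, hq2⟩, hle⟩ := ho
      have b1 := Finset.mem_Icc.mp hq1
      have b2 := hbβ _ hq2
      have heq : phiFold d (ch i) = q := by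
        rw [← hq]
        obtain ⟨x, y⟩ := q
        simp only [phiFold, reflPair]
        simp only at hle b1 b2 ⊢
        split_ifs with h1 <;> simp only [h1, ↓reduceIte, Prod.mk.injEq] <;> omega
      rw [heq]; exact hqU
  -- key order lemma : folding preserves the chain order termwise
  have key : ∀ i j : Fin t, i < j →
      (phiFold d (ch j)).1 < (phiFold d (ch i)).1 ∧
        (phiFold d (ch i)).2 < (phiFold d (ch j)).2 := by
    intro i j hij
    have hr := hrows hij
    have hc := hcols hij
    simp only at hr hc
    have bi := hbnd i
    have bj := hbnd j
    simp only [phiFold, reflPair]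
    split_ifs with h1 h2 h2 <;> (try simp only []) <;> omega
  have hanti : StrictAnti fun i : Fin t => (phiFold d (ch i)).1 :=
    fun i j hij => (key i j hij).1
  have hmono : StrictMono fun i : Fin t => (phiFold d (ch i)).2 :=
    fun i j hij => (key i j hij).2
  refine ⟨⟨?_, fun i => ⟨hU _ (hmemU i), hmemU i⟩⟩, ⟨Equiv.refl _, hanti, hmono⟩, ?_⟩
  · intro i j h
    have h1 : (phiFold d (ch i)).1 = (phiFold d (ch j)).1 := by
      simp only at h; rw [h]
    exact hanti.injective h1
  · intro i
    have bi := hbnd i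
    rw [Multiset.mem_add]
    by_cases h : (ch i).1 ≤ 2 * d + 1 - (ch i).2
    · left
      refine Multiset.mem_map.mpr ⟨i, Finset.mem_univ_val i, ?_⟩
      simp [phiFold, h]
    · right
      refine Multiset.mem_map.mpr ⟨phiFold d (ch i),
        Multiset.mem_map.mpr ⟨i, Finset.mem_univ_val i, rfl⟩, ?_⟩
      simp only [phiFold, reflPair, if_neg h, Prod.ext_iff]
      omega
end

section
/- Let k be a field and consider the polynomial ring in variables X_{(r,c)} indexed by pairs of positive integers, where the variables are linearly ordered by: X_{(r,c)} > X_{(r',c')} if and only if r > r', or r = r' and c < c'. Equip monomials with the homogeneous (degree-then-lexicographic) order determined by this order on the variables. Fix integers R₁ < R₂ < … < R_k and C₁ < C₂ < … < C_k, and let M be the k×k matrix with entries M_{ij} = X_{(R_i, C_j)}. Then the initial (leading) term of det M with respect to this monomial order is (−1)^{k(k−1)/2} · ∏_{i=1}^{k} X_{(R_{k+1−i}, C_i)}, the antidiagonal product; in particular, the index pairs (R_k, C₁), (R_{k−1}, C₂), …, (R₁, C_k) of the initial monomial have strictly decreasing rows and strictly increasing columns. -/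
/-- The order on the variables `X_{(r,c)}`: `X_{(r,c)} > X_{(r',c')}` iff `r > r'`, or
`r = r'` and `c < c'`.  `varLT p q` says that the variable `X_p` is smaller than `X_q`. -/
def varLT (p q : ℕ × ℕ) : Prop :=
  p.1 < q.1 ∨ (p.1 = q.1 ∧ q.2 < p.2)

/-- The total degree of a monomial (exponent vector). -/
def monDeg (m : (ℕ × ℕ) →₀ ℕ) : ℕ := m.sum fun _ e => e

/-- The homogeneous lexicographic order on monomials determined by `varLT`: first
compare total degrees; in case of equal degrees, `m < m'` iff at some variable `v` we
have `m v < m' v` while `m` and `m'` agree on all variables larger than `v`. -/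
def hlexLT (m m' : (ℕ × ℕ) →₀ ℕ) : Prop :=
  monDeg m < monDeg m' ∨
    (monDeg m = monDeg m' ∧ ∃ v : ℕ × ℕ, m v < m' v ∧ ∀ w : ℕ × ℕ, varLT v w → m w = m' w)

section Aux

variable {k : ℕ} {R C : Fin k → ℕ}

/-- The monomial of `det M` associated with the assignment `g` (column `j` gets row `g j`). -/
noncomputable def mper (R C : Fin k → ℕ) (g : Fin k → Fin k) : (ℕ × ℕ) →₀ ℕ :=
  ∑ j : Fin k, Finsupp.single (R (g j), C j) 1

lemma mper_apply (g : Fin k → Fin k) (p : ℕ × ℕ) :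
    mper R C g p = ∑ j : Fin k, if (R (g j), C j) = p then 1 else 0 := by
  classical
  simp [mper, Finsupp.finset_sum_apply, Finsupp.single_apply]

lemma mper_apply_pt (hR : StrictMono R) (hC : StrictMono C) (g : Fin k → Fin k) (a b : Fin k) :
    mper R C g (R a, C b) = if g b = a then 1 else 0 := by
  classical
  rw [mper_apply]
  rw [Finset.sum_eq_single b]
  · simp [Prod.ext_iff, hR.injective.eq_iff]
  · intro j _ hj
    simp only [Prod.mk.injEq, ite_eq_right_iff, and_imp]
    intro _ h
    exact absurd (hC.injective h) hj
  · simp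

lemma mper_inj (hR : StrictMono R) (hC : StrictMono C) {g h : Fin k → Fin k}
    (H : mper R C g = mper R C h) : g = h := by
  funext b
  have h1 : mper R C h (R (g b), C b) = 1 := by
    rw [← H, mper_apply_pt hR hC, if_pos rfl]
  rw [mper_apply_pt hR hC] at h1
  by_contra hne
  rw [if_neg (fun hh => hne hh.symm)] at h1
  exact one_ne_zero h1.symm

lemma monDeg_mper (g : Fin k → Fin k) : monDeg (mper R C g) = k := by
  classical
  rw [monDeg, mper, ← Finsupp.sum_finset_sum_index (fun _ => rfl) (fun _ _ _ => rfl)]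
  simp [Finsupp.sum_single_index]

lemma key_lt (hR : StrictMono R) (hC : StrictMono C) (σ : Equiv.Perm (Fin k))
    (hσ : ⇑σ ≠ Fin.rev) :
    ∃ v : ℕ × ℕ, mper R C σ v < mper R C Fin.rev v ∧
      ∀ w : ℕ × ℕ, varLT v w → mper R C σ w = mper R C Fin.rev w := by
  classical
  have hRj := hR.injective
  have hCj := hC.injective
  set s : Finset (Fin k) := Finset.univ.filter (fun a => σ a.rev ≠ a) with hs
  have hsne : s.Nonempty := by
    by_contra hemp
    rw [Finset.not_nonempty_iff_eq_empty] at hemp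
    apply hσ
    funext x
    have : x.rev ∉ s := by rw [hemp]; exact Finset.notMem_empty _
    simpa [hs, Fin.rev_rev] using this
  set i : Fin k := s.max' hsne with hi
  have his : σ i.rev ≠ i := by
    have := s.max'_mem hsne
    simpa [hs] using this
  have F1 : ∀ j, i < j → σ j.rev = j := by
    intro j hj
    by_contra hn
    have : j ∈ s := by simp [hs, hn]
    exact absurd (s.le_max' j this) (not_le.mpr hj)
  have F2 : ∀ c, σ c = i → i.rev < c := by
    intro c hc
    rcases lt_trichotomy c i.rev with h | h | h
    · exfalso
      have hic : i < c.rev := by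
        have h1 := c.isLt
        have h2 := i.isLt
        simp only [Fin.lt_iff_val_lt_val, Fin.val_rev] at h ⊢
        omega
      have := F1 c.rev hic
      rw [Fin.rev_rev] at this
      rw [hc] at this
      exact absurd (this ▸ hic) (lt_irrefl _)
    · exact absurd (h ▸ hc) his
    · exact h
  refine ⟨(R i, C i.rev), ?_, ?_⟩
  · rw [mper_apply_pt hR hC, mper_apply_pt hR hC, if_neg his, if_pos (Fin.rev_rev i)]
    exact Nat.zero_lt_one
  · intro w hw
    rcases hw with hw | ⟨hw1, hw2⟩
    · -- R i < w.1
      rw [mper_apply, mper_apply]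
      refine Finset.sum_congr rfl fun j _ => ?_
      refine if_congr ?_ rfl rfl
      constructor
      · rintro h
        have h1 : R (σ j) = w.1 := congrArg Prod.fst h
        have hlt : i < σ j := hR.lt_iff_lt.mp (h1 ▸ hw)
        have := F1 (σ j) hlt
        have hj : σ j = j.rev := by
          have h2 := σ.injective this
          rw [← h2, Fin.rev_rev]
          exact this
        rw [← hj]; exact h
      · rintro h
        have h1 : R j.rev = w.1 := congrArg Prod.fst h
        have hlt : i < j.rev := hR.lt_iff_lt.mp (h1 ▸ hw)
        have := F1 j.rev hlt
        rw [Fin.rev_rev] at this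
        rw [this]; exact h
    · -- w.1 = R i and w.2 < C i.rev
      rw [mper_apply, mper_apply]
      rw [Finset.sum_eq_zero, Finset.sum_eq_zero]
      · intro j _
        rw [if_neg]
        rintro rfl
        have h1 : R j.rev = R i := hw1.symm
        have : j = i.rev := by
          have := hRj h1
          rw [← this, Fin.rev_rev]
        subst this
        exact absurd hw2 (lt_irrefl _)
      · intro j _
        rw [if_neg]
        rintro rfl
        have h1 : σ j = i := hRj hw1.symm
        have := hC.lt_iff_lt.mpr (F2 j h1)
        exact absurd hw2 (not_lt.mpr (le_of_lt this)).elim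
  
end Aux

lemma sign_revPerm' (n : ℕ) :
    Equiv.Perm.sign (Fin.revPerm : Equiv.Perm (Fin n)) = (-1) ^ (n * (n - 1) / 2) := by
  induction n with
  | zero => simp [Subsingleton.elim (Fin.revPerm : Equiv.Perm (Fin 0)) 1]
  | succ n ih =>
    set D : Equiv.Perm (Fin (n+1)) :=
      Equiv.Perm.decomposeFin.symm (0, (Fin.revPerm : Equiv.Perm (Fin n))) with hD
    have h : finRotate (n+1) * ((Fin.revPerm : Equiv.Perm (Fin (n+1))) * D) = 1 := by
      ext x
      simp only [Equiv.Perm.mul_apply, Equiv.Perm.one_apply]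
      induction x using Fin.cases with
      | zero => simp [hD, Equiv.Perm.decomposeFin_symm_apply_zero, finRotate_last]
      | succ i =>
        rw [hD, Equiv.Perm.decomposeFin_symm_apply_succ]
        simp [Fin.rev_succ, Fin.coeSucc_eq_succ]
    have key : (Fin.revPerm : Equiv.Perm (Fin (n+1))) = (finRotate (n+1))⁻¹ * D⁻¹ := by
      have h2 : (Fin.revPerm : Equiv.Perm (Fin (n+1))) * D = (finRotate (n+1))⁻¹ :=
        eq_inv_of_mul_eq_one_right h
      rw [← h2]; group
    rw [key, map_mul, map_inv, map_inv, sign_finRotate, hD,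
      Equiv.Perm.decomposeFin.symm_sign, if_pos rfl, one_mul, ih]
    have h3 : ∀ m : ℕ, ((-1 : ℤˣ) ^ m)⁻¹ = (-1) ^ m := fun m => by
      rcases Int.units_eq_one_or ((-1 : ℤˣ) ^ m) with h | h <;> rw [h] <;> rfl
    rw [h3, h3, ← pow_add]
    congr 1
    obtain ⟨t, ht⟩ := Nat.even_mul_pred_self n
    have h4 : (n + 1) * (n + 1 - 1) = n * (n - 1) + 2 * n := by
      cases n with
      | zero => rfl
      | succ m => simp [Nat.succ_sub_one]; ring
    omega

/-- Let `M` be the `k × k` matrix with entries `M_{ij} = X_{(R_i, C_j)}`, where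
`R₁ < ⋯ < R_k` and `C₁ < ⋯ < C_k` are positive integers.  With respect to the
homogeneous lexicographic order on monomials determined by `varLT`, the initial term of
`det M` is `(−1)^{k(k−1)/2} ∏_{i=1}^k X_{(R_{k+1−i}, C_i)}`, the antidiagonal term: the
antidiagonal monomial `m₀` occurs in `det M` with coefficient `(−1)^{k(k−1)/2}`, every
other monomial of `det M` is strictly smaller than `m₀`, and the index pairs of `m₀`
have strictly decreasing rows and strictly increasing columns. -/
theorem statement6 (K : Type*) [Field K] (k : ℕ) (hk : 0 < k)
    (R C : Fin k → ℕ) (hR1 : ∀ i, 0 < R i) (hC1 : ∀ i, 0 < C i)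
    (hR : StrictMono R) (hC : StrictMono C)
    (M : Matrix (Fin k) (Fin k) (MvPolynomial (ℕ × ℕ) K))
    (hM : ∀ i j, M i j = MvPolynomial.X (R i, C j))
    (m₀ : (ℕ × ℕ) →₀ ℕ)
    (hm₀ : m₀ = ∑ i : Fin k, Finsupp.single (R i.rev, C i) 1) :
    MvPolynomial.coeff m₀ M.det = (-1 : K) ^ (k * (k - 1) / 2) ∧
    (∀ m ∈ M.det.support, m ≠ m₀ → hlexLT m m₀) ∧
    StrictAnti (fun i : Fin k => R i.rev) ∧ StrictMono C := by
  classical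
  have hm₀' : m₀ = mper R C Fin.rev := by rw [hm₀]; rfl
  -- each permutation's product is a monomial
  have hprod : ∀ σ : Equiv.Perm (Fin k),
      ∏ j : Fin k, M (σ j) j = MvPolynomial.monomial (mper R C ⇑σ) (1 : K) := by
    intro σ
    rw [mper]
    induction (Finset.univ : Finset (Fin k)) using Finset.induction with
    | empty => simp [MvPolynomial.monomial_zero', MvPolynomial.C_1]
    | insert _ _ hx ih =>
      rw [Finset.prod_insert hx, Finset.sum_insert hx, ih, hM,
        show (MvPolynomial.X (R (σ _), C _) : MvPolynomial (ℕ×ℕ) K)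
          = MvPolynomial.monomial (Finsupp.single (R (σ _), C _) 1) 1 from rfl,
        MvPolynomial.monomial_mul, one_mul]
  -- coefficient formula
  have hcoeff : ∀ m : (ℕ × ℕ) →₀ ℕ, MvPolynomial.coeff m M.det =
      ∑ σ : Equiv.Perm (Fin k),
        ((Equiv.Perm.sign σ : ℤ) : K) * (if mper R C ⇑σ = m then 1 else 0) := by
    intro m
    rw [Matrix.det_apply, MvPolynomial.coeff_sum]
    refine Finset.sum_congr rfl fun σ _ => ?_
    rw [Units.smul_def, MvPolynomial.coeff_smul, hprod σ, MvPolynomial.coeff_monomial,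
      zsmul_eq_mul]
  refine ⟨?_, ?_, ?_, hC⟩
  · rw [hcoeff m₀]
    rw [Finset.sum_eq_single_of_mem (Fin.revPerm : Equiv.Perm (Fin k)) (Finset.mem_univ _)]
    · rw [if_pos, mul_one, sign_revPerm']
      · push_cast
        rfl
      · rw [hm₀']; rfl
    · intro σ _ hσ
      rw [if_neg, mul_zero]
      rw [hm₀']
      intro hEq
      apply hσ
      exact Equiv.coe_fn_injective (mper_inj hR hC hEq)
  · intro m hm hne
    rw [MvPolynomial.mem_support_iff, hcoeff m] at hm
    obtain ⟨σ, -, hσ⟩ := Finset.exists_ne_zero_of_sum_ne_zero hm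
    have hmσ : mper R C ⇑σ = m := by
      by_contra h
      rw [if_neg h, mul_zero] at hσ
      exact hσ rfl
    have hσrev : ⇑σ ≠ Fin.rev := by
      intro h
      apply hne
      rw [← hmσ, hm₀', h]
    obtain ⟨v, hv1, hv2⟩ := key_lt hR hC σ hσrev
    right
    refine ⟨?_, v, ?_, ?_⟩
    · rw [← hmσ, hm₀', monDeg_mper, monDeg_mper]
    · rw [← hmσ, hm₀']; exact hv1
    · intro w hw; rw [← hmσ, hm₀']; exact hv2 w hw
  · intro a b hab
    exact hR (Fin.rev_lt_rev.mpr hab)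
end
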